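/- Let 0 ≤ β ≤ α ≤ 1 and 0 ≤ β' ≤ α' ≤ 1, and let s ∈ ℝ. Define the weight w^s on I^(α,β) by w_i^s = 2^{js} for i = (j,m,ℓ) ∈ I₀^(α,β) and w₀^s = 1. Then for all i ∈ I^(α,β) and i' ∈ I^(α',β') with Q_i^(α,β) ∩ Q_{i'}^(α',β') ≠ ∅ one has 2^{−4|s|}·w_{i'}^s ≤ w_i^s ≤ 2^{4|s|}·w_{i'}^s; moreover |det T_i^(α,β)| = w_i^{α+β}, so that 2^{−4(α+β)}·w_{i'}^{α+β} ≤ |det T_i^(α,β)| ≤ 2^{4(α+β)}·w_{i'}^{α+β} for such i, i'. -/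
import Mathlib


noncomputable section

open Real Set MeasureTheory Pointwise
open scoped ENNReal

/-- `ℝ²` with the Euclidean norm. -/
abbrev R2 : Type := EuclideanSpace ℝ (Fin 2)

/-- The vector `(a, b) ∈ ℝ²`. -/
def vec2 (a b : ℝ) : R2 := (EuclideanSpace.equiv (Fin 2) ℝ).symm ![a, b]

/-- Action of a `2×2` matrix on `ℝ²`. -/
def mulV (M : Matrix (Fin 2) (Fin 2) ℝ) (x : R2) : R2 :=
  (EuclideanSpace.equiv (Fin 2) ℝ).symm (M.mulVec ((EuclideanSpace.equiv (Fin 2) ℝ) x))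

/-- Rotation matrix through the angle `θ`. -/
def Rmat (θ : ℝ) : Matrix (Fin 2) (Fin 2) ℝ :=
  !![Real.cos θ, -Real.sin θ; Real.sin θ, Real.cos θ]

/-- The diagonal matrix `A_j = diag(2^{αj}, 2^{βj})`. -/
def Amat (α β : ℝ) (j : ℕ) : Matrix (Fin 2) (Fin 2) ℝ :=
  !![(2:ℝ) ^ (α * (j:ℝ)), 0; 0, (2:ℝ) ^ (β * (j:ℝ))]

/-- The angle `Θ_{j,ℓ} = 2ℓ·(π/N)·2^{(β − 1)j}`, with `N = 10`. -/
def Theta (β : ℝ) (j ℓ : ℕ) : ℝ :=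
  2 * (ℓ:ℝ) * (Real.pi / 10) * (2:ℝ) ^ ((β - 1) * (j:ℝ))

/-- The translation `c_{j,m} = (2^{j−1} + m·2^{αj}, 0)ᵗ`. -/
def cvec (α : ℝ) (j m : ℕ) : R2 :=
  vec2 ((2:ℝ) ^ ((j:ℝ) - 1) + (m:ℝ) * (2:ℝ) ^ (α * (j:ℝ))) 0

/-- The base set `Q = (−ε, 1+ε) × (−1−ε, 1+ε)`. -/
def baseQ (ε : ℝ) : Set R2 :=
  {x : R2 | x 0 ∈ Set.Ioo (-ε) (1+ε) ∧ x 1 ∈ Set.Ioo (-1-ε) (1+ε)}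

/-- `m_j^max = ⌈2^{(1−α)j−1}⌉`. -/
def mjmax (α : ℝ) (j : ℕ) : ℤ := ⌈(2:ℝ) ^ ((1-α) * (j:ℝ) - 1)⌉

/-- `ℓ_j^max = ⌈N·2^{(1−β)j}⌉`, with `N = 10`. -/
def ljmax (β : ℝ) (j : ℕ) : ℤ := ⌈(10:ℝ) * (2:ℝ) ^ ((1-β) * (j:ℝ))⌉

/-- Membership of a triple `(j,m,ℓ)` in the index set
`I₀ = {(j,m,ℓ) ∈ ℕ × ℕ₀ × ℕ₀ : m ≤ m_j^max, ℓ ≤ ℓ_j^max}` (with `ℕ = {1,2,…}`). -/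
def memI0 (α β : ℝ) (i : ℕ × ℕ × ℕ) : Prop :=
  1 ≤ i.1 ∧ (i.2.1 : ℤ) ≤ mjmax α i.1 ∧ (i.2.2 : ℤ) ≤ ljmax β i.1

/-- The set `Q_{j,m,ℓ} = R_{j,ℓ}(A_j·Q + c_{j,m})`. -/
def Qset (α β ε : ℝ) (j m ℓ : ℕ) : Set R2 :=
  (fun x => mulV (Rmat (Theta β j ℓ)) (mulV (Amat α β j) x + cvec α j m)) '' baseQ ε

/-- The index set `I = {0} ∪ I₀`: `none` plays the role of the index `0`. -/
abbrev Idx : Type := Option (ℕ × ℕ × ℕ)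

/-- Membership in `I = {0} ∪ I₀`. -/
def memI (α β : ℝ) : Idx → Prop
  | none => True
  | some i => memI0 α β i

/-- The family `(Q_i)_{i ∈ I}`, where `Q₀ = B₄(0)` is the open Euclidean ball of
radius `4` about the origin. -/
def QsetI (α β ε : ℝ) : Idx → Set R2
  | none => Metric.ball (0:R2) 4
  | some (j, m, ℓ) => Qset α β ε j m ℓ

/-- The invertible matrices `T_i`: `T_{j,m,ℓ} = R_{j,ℓ}·A_j` for `(j,m,ℓ) ∈ I₀` and
`T₀ = id`. -/
def Tmat (α β : ℝ) : Idx → Matrix (Fin 2) (Fin 2) ℝ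
  | none => 1
  | some (j, _, ℓ) => Rmat (Theta β j ℓ) * Amat α β j

/-- The weight `w^s` on `I`: `w_i^s = 2^{js}` for `i = (j,m,ℓ) ∈ I₀` and `w₀^s = 1`. -/
def wI (s : ℝ) : Idx → ℝ
  | none => 1
  | some i => (2:ℝ) ^ ((i.1:ℝ) * s)

lemma mulV_apply0 (M : Matrix (Fin 2) (Fin 2) ℝ) (x : R2) :
    mulV M x 0 = M 0 0 * x 0 + M 0 1 * x 1 := by
  simp [mulV, Matrix.mulVec, dotProduct, Fin.sum_univ_two]
lemma mulV_apply1 (M : Matrix (Fin 2) (Fin 2) ℝ) (x : R2) :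
    mulV M x 1 = M 1 0 * x 0 + M 1 1 * x 1 := by
  simp [mulV, Matrix.mulVec, dotProduct, Fin.sum_univ_two]
lemma add_apply' (a b : R2) (i : Fin 2) : (a + b) i = a i + b i := rfl
lemma vec2_apply0 (a b : ℝ) : vec2 a b 0 = a := rfl
lemma vec2_apply1 (a b : ℝ) : vec2 a b 1 = b := rfl

lemma norm_R2 (x : R2) : ‖x‖ = Real.sqrt ((x 0)^2 + (x 1)^2) := by
  rw [EuclideanSpace.norm_eq]; simp [Fin.sum_univ_two, sq_abs]

set_option maxHeartbeats 1000000 in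
lemma mem_Qset_norm (α β ε : ℝ) (hβ0 : 0 ≤ β) (hβα : β ≤ α) (hα1 : α ≤ 1)
    (hε : 0 < ε) (hε32 : ε < 1/32) (j m ℓ : ℕ) (hm : (m:ℤ) ≤ mjmax α j)
    (x : R2) (hx : x ∈ Qset α β ε j m ℓ) :
    (15/32) * (2:ℝ)^(j:ℝ) ≤ ‖x‖ ∧ ‖x‖ ≤ 6 * (2:ℝ)^(j:ℝ) := by
  obtain ⟨q, ⟨⟨hq00, hq01⟩, hq10, hq11⟩, rfl⟩ := hx
  have hx0 : mulV (Rmat (Theta β j ℓ)) (mulV (Amat α β j) q + cvec α j m) 0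
      = Real.cos (Theta β j ℓ) * ((2:ℝ)^(α*(j:ℝ)) * q 0 + ((2:ℝ)^((j:ℝ)-1) + (m:ℝ)*(2:ℝ)^(α*(j:ℝ))))
        - Real.sin (Theta β j ℓ) * ((2:ℝ)^(β*(j:ℝ)) * q 1) := by
    simp [mulV_apply0, mulV_apply1, add_apply', Rmat, Amat, cvec, vec2_apply0, vec2_apply1]
    try ring
  have hx1 : mulV (Rmat (Theta β j ℓ)) (mulV (Amat α β j) q + cvec α j m) 1
      = Real.sin (Theta β j ℓ) * ((2:ℝ)^(α*(j:ℝ)) * q 0 + ((2:ℝ)^((j:ℝ)-1) + (m:ℝ)*(2:ℝ)^(α*(j:ℝ))))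
        + Real.cos (Theta β j ℓ) * ((2:ℝ)^(β*(j:ℝ)) * q 1) := by
    simp [mulV_apply0, mulV_apply1, add_apply', Rmat, Amat, cvec, vec2_apply0, vec2_apply1]
    try ring
  set E0 : ℝ := (2:ℝ)^(α*(j:ℝ)) * q 0 + ((2:ℝ)^((j:ℝ)-1) + (m:ℝ)*(2:ℝ)^(α*(j:ℝ))) with hE0
  set E1 : ℝ := (2:ℝ)^(β*(j:ℝ)) * q 1 with hE1
  have hnorm : ‖(mulV (Rmat (Theta β j ℓ)) (mulV (Amat α β j) q + cvec α j m))‖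
      = Real.sqrt (E0^2 + E1^2) := by
    rw [norm_R2, hx0, hx1]
    congr 1
    have hcs : Real.sin (Theta β j ℓ)^2 + Real.cos (Theta β j ℓ)^2 = 1 :=
      Real.sin_sq_add_cos_sq _
    linear_combination (E0^2 + E1^2) * hcs
  have hP : (0:ℝ) < (2:ℝ)^(j:ℝ) := Real.rpow_pos_of_pos (by norm_num) _
  have hPa : (0:ℝ) < (2:ℝ)^(α*(j:ℝ)) := Real.rpow_pos_of_pos (by norm_num) _
  have hPb : (0:ℝ) < (2:ℝ)^(β*(j:ℝ)) := Real.rpow_pos_of_pos (by norm_num) _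
  have haj : (2:ℝ)^(α*(j:ℝ)) ≤ (2:ℝ)^(j:ℝ) := by
    apply Real.rpow_le_rpow_of_exponent_le (by norm_num)
    nlinarith [Nat.cast_nonneg (α := ℝ) j]
  have hbj : (2:ℝ)^(β*(j:ℝ)) ≤ (2:ℝ)^(j:ℝ) := by
    apply Real.rpow_le_rpow_of_exponent_le (by norm_num)
    nlinarith [Nat.cast_nonneg (α := ℝ) j]
  have hhalf : (2:ℝ)^((j:ℝ)-1) = (2:ℝ)^(j:ℝ) / 2 := by
    rw [Real.rpow_sub (by norm_num), Real.rpow_one]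
  have hmle : (m:ℝ) * (2:ℝ)^(α*(j:ℝ)) ≤ (2:ℝ)^((j:ℝ)-1) + (2:ℝ)^(α*(j:ℝ)) := by
    have h1 : (m:ℝ) ≤ (2:ℝ)^((1-α)*(j:ℝ)-1) + 1 := by
      have ha : (m:ℝ) ≤ (⌈(2:ℝ) ^ ((1-α) * (j:ℝ) - 1)⌉ : ℝ) := by exact_mod_cast hm
      have hb := Int.ceil_lt_add_one ((2:ℝ) ^ ((1-α) * (j:ℝ) - 1))
      linarith
    have h2 : (2:ℝ)^((1-α)*(j:ℝ)-1) * (2:ℝ)^(α*(j:ℝ)) = (2:ℝ)^((j:ℝ)-1) := by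
      rw [← Real.rpow_add (by norm_num)]; ring_nf
    nlinarith [hPa.le]
  have hy0lb : (15/32) * (2:ℝ)^(j:ℝ) ≤ E0 := by
    rw [hE0, hhalf]
    have e1 : -(ε * (2:ℝ)^(j:ℝ)) ≤ (2:ℝ)^(α*(j:ℝ)) * q 0 := by nlinarith
    have e2 : (0:ℝ) ≤ (m:ℝ) * (2:ℝ)^(α*(j:ℝ)) := by positivity
    nlinarith
  have hy0ub : E0 ≤ 4 * (2:ℝ)^(j:ℝ) := by
    rw [hE0]
    have e1 : (2:ℝ)^(α*(j:ℝ)) * q 0 ≤ (1+ε) * (2:ℝ)^(α*(j:ℝ)) := by nlinarith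
    nlinarith
  have hy1b : |E1| ≤ 2 * (2:ℝ)^(j:ℝ) := by
    rw [hE1, abs_mul, abs_of_pos hPb]
    have e1 : |q 1| ≤ 1 + ε := abs_le.mpr ⟨by linarith, by linarith⟩
    nlinarith
  rw [hnorm]
  constructor
  · have h1 : (15/32) * (2:ℝ)^(j:ℝ) ≤ Real.sqrt (E0^2) := by
      rw [Real.sqrt_sq (by nlinarith)]; exact hy0lb
    refine h1.trans (Real.sqrt_le_sqrt (by nlinarith))
  · have h2 : Real.sqrt (E0^2 + E1^2) ≤ Real.sqrt ((6 * (2:ℝ)^(j:ℝ))^2) := by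
      apply Real.sqrt_le_sqrt
      nlinarith [sq_abs E1, abs_nonneg E1]
    rwa [Real.sqrt_sq (by positivity)] at h2

def jOf : Idx → ℕ
  | none => 0
  | some i => i.1

lemma wI_eq (s : ℝ) (i : Idx) : wI s i = (2:ℝ) ^ ((jOf i : ℝ) * s) := by
  cases i with
  | none => simp [wI, jOf]
  | some i => rfl

lemma jOf_le (α β ε α' β' ε' : ℝ)
    (hβ0 : 0 ≤ β) (hβα : β ≤ α) (hα1 : α ≤ 1)
    (hβ0' : 0 ≤ β') (hβα' : β' ≤ α') (hα1' : α' ≤ 1)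
    (hε : ε ∈ Set.Ioo (0:ℝ) (1/32)) (hε' : ε' ∈ Set.Ioo (0:ℝ) (1/32))
    (i i' : Idx) (hi : memI α β i) (hi' : memI α' β' i')
    (h : (QsetI α β ε i ∩ QsetI α' β' ε' i').Nonempty) :
    jOf i ≤ jOf i' + 4 := by
  obtain ⟨x, hx, hx'⟩ := h
  cases i with
  | none => simp [jOf]
  | some p =>
    obtain ⟨j, m, ℓ⟩ := p
    obtain ⟨hj1, hm, -⟩ := hi
    have hb := mem_Qset_norm α β ε hβ0 hβα hα1 hε.1 hε.2 j m ℓ hm x hx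
    have hP : ((2:ℝ))^(j:ℝ) ≤ (32/15) * ‖x‖ := by linarith [hb.1]
    cases i' with
    | none =>
      have hxb : ‖x‖ < 4 := by simpa [QsetI] using hx'
      have : (2:ℝ)^(j:ℝ) < (2:ℝ)^((4:ℕ):ℝ) := by
        have : (2:ℝ)^((4:ℕ):ℝ) = 16 := by norm_num
        rw [this]; linarith
      have := (Real.rpow_lt_rpow_left_iff (x := (2:ℝ)) (by norm_num)).mp this
      have : j < 4 := by exact_mod_cast this
      simp [jOf]; omega
    | some p' =>
      obtain ⟨j', m', ℓ'⟩ := p'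
      obtain ⟨hj1', hm', -⟩ := hi'
      have hb' := mem_Qset_norm α' β' ε' hβ0' hβα' hα1' hε'.1 hε'.2 j' m' ℓ' hm' x hx'
      have h16 : (2:ℝ)^(j:ℝ) ≤ (2:ℝ)^((j':ℝ)+4) := by
        have hr : (2:ℝ)^((j':ℝ)+4) = 16 * (2:ℝ)^(j':ℝ) := by
          rw [Real.rpow_add (by norm_num)]; norm_num; ring
        rw [hr]
        have := hb'.2
        nlinarith [Real.rpow_pos_of_pos (show (0:ℝ)<2 by norm_num) (j':ℝ)]
      have := (Real.rpow_le_rpow_left_iff (x := (2:ℝ)) (by norm_num)).mp h16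
      have : (j:ℝ) ≤ (j':ℝ) + 4 := this
      simp [jOf]
      exact_mod_cast this

lemma weight_bound (s : ℝ) (J J' : ℕ) (h1 : J ≤ J' + 4) (h2 : J' ≤ J + 4) :
    (2:ℝ) ^ ((J:ℝ) * s) ≤ (2:ℝ) ^ (4 * |s|) * (2:ℝ) ^ ((J':ℝ) * s) := by
  rw [← Real.rpow_add (by norm_num)]
  apply Real.rpow_le_rpow_of_exponent_le (by norm_num)
  have h1' : (J:ℝ) ≤ (J':ℝ) + 4 := by exact_mod_cast h1
  have h2' : (J':ℝ) ≤ (J:ℝ) + 4 := by exact_mod_cast h2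
  rcases abs_cases s with ⟨he, hp⟩ | ⟨he, hn⟩ <;> rw [he] <;> nlinarith


/-- Relative moderateness of the weight `w^s` and of the covering
`Q^{(α,β)}` with respect to `Q^{(α',β')}`: if `i ∈ I^{(α,β)}`, `i' ∈ I^{(α',β')}` and
`Q_i^{(α,β)} ∩ Q_{i'}^{(α',β')} ≠ ∅`, then `2^{−4|s|}·w_{i'}^s ≤ w_i^s ≤ 2^{4|s|}·w_{i'}^s`;
moreover `|det T_i^{(α,β)}| = w_i^{α+β}`, so that
`2^{−4(α+β)}·w_{i'}^{α+β} ≤ |det T_i^{(α,β)}| ≤ 2^{4(α+β)}·w_{i'}^{α+β}`. -/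
theorem wavePacket_relatively_moderate (α β ε α' β' ε' s : ℝ)
    (hβ0 : 0 ≤ β) (hβα : β ≤ α) (hα1 : α ≤ 1)
    (hβ0' : 0 ≤ β') (hβα' : β' ≤ α') (hα1' : α' ≤ 1)
    (hε : ε ∈ Set.Ioo (0:ℝ) (1/32)) (hε' : ε' ∈ Set.Ioo (0:ℝ) (1/32))
    (i i' : Idx) (hi : memI α β i) (hi' : memI α' β' i')
    (h : (QsetI α β ε i ∩ QsetI α' β' ε' i').Nonempty) :
    ((2:ℝ) ^ (-(4 * |s|)) * wI s i' ≤ wI s i ∧ wI s i ≤ (2:ℝ) ^ (4 * |s|) * wI s i') ∧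
    |(Tmat α β i).det| = wI (α + β) i ∧
    ((2:ℝ) ^ (-(4 * (α + β))) * wI (α + β) i' ≤ |(Tmat α β i).det| ∧
      |(Tmat α β i).det| ≤ (2:ℝ) ^ (4 * (α + β)) * wI (α + β) i') := by
  have h' : (QsetI α' β' ε' i' ∩ QsetI α β ε i).Nonempty := by
    obtain ⟨x, h1, h2⟩ := h; exact ⟨x, h2, h1⟩
  have hJ1 := jOf_le α β ε α' β' ε' hβ0 hβα hα1 hβ0' hβα' hα1' hε hε' i i' hi hi' h
  have hJ2 := jOf_le α' β' ε' α β ε hβ0' hβα' hα1' hβ0 hβα hα1 hε' hε i' i hi' hi h'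
  have key : ∀ t : ℝ, (2:ℝ) ^ (-(4 * |t|)) * wI t i' ≤ wI t i ∧
      wI t i ≤ (2:ℝ) ^ (4 * |t|) * wI t i' := by
    intro t
    rw [wI_eq, wI_eq]
    constructor
    · have := weight_bound t (jOf i') (jOf i) hJ2 hJ1
      rw [Real.rpow_neg (by norm_num)]
      rw [inv_mul_le_iff₀ (by positivity)]
      linarith [this]
    · exact weight_bound t (jOf i) (jOf i') hJ1 hJ2
  have hdet : |(Tmat α β i).det| = wI (α + β) i := by
    cases i with
    | none => simp [Tmat, wI]
    | some p =>
      obtain ⟨j, m, ℓ⟩ := p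
      have : (Tmat α β (some (j, m, ℓ))).det
          = (2:ℝ)^(α*(j:ℝ)) * (2:ℝ)^(β*(j:ℝ)) := by
        rw [Tmat, Matrix.det_mul]
        rw [Rmat, Amat, Matrix.det_fin_two_of, Matrix.det_fin_two_of]
        have hcs := Real.sin_sq_add_cos_sq (Theta β j ℓ)
        linear_combination ((2:ℝ)^(α*(j:ℝ)) * (2:ℝ)^(β*(j:ℝ))) * hcs
      rw [this, ← Real.rpow_add (by norm_num)]
      rw [abs_of_pos (Real.rpow_pos_of_pos (by norm_num) _)]
      show _ = (2:ℝ) ^ ((j:ℝ) * (α + β))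
      ring_nf
  have hab : |α + β| = α + β := abs_of_nonneg (by linarith)
  refine ⟨key s, hdet, ?_, ?_⟩
  · rw [hdet]; have := (key (α+β)).1; rwa [hab] at this
  · rw [hdet]; have := (key (α+β)).2; rwa [hab] at this
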